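/- Let n ≥ 1, d ≥ 2. Let 𝒜 and ℬ be disjoint finite sets of multi-indices of degree d−1 in n variables, let c_a > 0 for each a ∈ 𝒜 ∪ ℬ, and let q = Σ_{a∈𝒜} c_a x^a − Σ_{b∈ℬ} c_b x^b ∈ ℝ[x₁,…,xₙ]. Let I_f, I_g, and I_{f⊕g} be the monomial ideals generated by {x^a : a ∈ 𝒜}, {x^b : b ∈ ℬ}, and {x^a : a ∈ 𝒜 ∪ ℬ} respectively. Then ρ(s·q) ≥ (H_{I_{f⊕g}}(d) − H_{I_f}(d)) + (H_{I_{f⊕g}}(d) − H_{I_g}(d)). -/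

import Mathlib

open MvPolynomial

lemma degree_one_eq_single {n : ℕ} {t : Fin n →₀ ℕ} (h : t.degree = 1) :
    ∃ i, t = Finsupp.single i 1 := by
  have hne : t ≠ 0 := by
    intro h0; rw [h0] at h; simp [Finsupp.degree] at h
  have hcard : t.support.card ≤ 1 := by
    have h2 := Finset.card_nsmul_le_sum t.support t 1
      (fun i hi => Nat.one_le_iff_ne_zero.mpr (Finsupp.mem_support_iff.mp hi))
    rw [smul_eq_mul, mul_one] at h2
    calc t.support.card ≤ ∑ i ∈ t.support, t i := h2
      _ = 1 := h
  have hpos : 0 < t.support.card := Finset.card_pos.mpr (Finsupp.support_nonempty_iff.mpr hne)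
  obtain ⟨i, b, hb, ht⟩ := Finsupp.card_support_eq_one'.mp (le_antisymm hcard hpos)
  have hdb : b = 1 := by
    have : t.degree = b := by
      rw [ht]; exact Finsupp.degree_single i b
    omega
  exact ⟨i, by rw [ht, hdb]⟩

noncomputable def shifts {n : ℕ} (S : Finset (Fin n →₀ ℕ)) : Finset (Fin n →₀ ℕ) :=
  (S ×ˢ (Finset.univ : Finset (Fin n))).image fun p => p.1 + Finsupp.single p.2 1

lemma mem_shifts {n : ℕ} {S : Finset (Fin n →₀ ℕ)} {m : Fin n →₀ ℕ} :
    m ∈ shifts S ↔ ∃ a ∈ S, ∃ i, m = a + Finsupp.single i 1 := by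
  constructor
  · intro hm
    obtain ⟨⟨a, i⟩, hmem, heq⟩ := Finset.mem_image.mp hm
    exact ⟨a, (Finset.mem_product.mp hmem).1, i, heq.symm⟩
  · rintro ⟨a, ha, i, rfl⟩
    exact Finset.mem_image.mpr ⟨⟨a, i⟩, Finset.mem_product.mpr ⟨ha, Finset.mem_univ i⟩, rfl⟩

lemma shifts_degree {n d : ℕ} (hd : 2 ≤ d) {S : Finset (Fin n →₀ ℕ)}
    (hS : ∀ a ∈ S, a.degree = d - 1) {m : Fin n →₀ ℕ} (hm : m.degree = d) :
    (∃ a ∈ S, a ≤ m) ↔ m ∈ shifts S := by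
  constructor
  · rintro ⟨a, ha, ham⟩
    obtain ⟨t, rfl⟩ := le_iff_exists_add.mp ham
    have hdeg : (a + t).degree = a.degree + t.degree := by
      simp [Finsupp.degree_eq_weight_one, map_add]
    rw [hdeg, hS a ha] at hm
    have ht : t.degree = 1 := by omega
    obtain ⟨i, rfl⟩ := degree_one_eq_single ht
    exact mem_shifts.mpr ⟨a, ha, i, rfl⟩
  · intro hmem
    obtain ⟨a, ha, i, rfl⟩ := mem_shifts.mp hmem
    exact ⟨a, ha, le_add_right le_rfl⟩

/-- The degree-`ℓ` homogeneous component of an ideal `I`, as a subspace. -/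
noncomputable def idealDegComp {n : ℕ} (I : Ideal (MvPolynomial (Fin n) ℝ)) (ℓ : ℕ) :
    Submodule ℝ (MvPolynomial (Fin n) ℝ) where
  carrier := {p | p ∈ I ∧ p.IsHomogeneous ℓ}
  add_mem' := fun ha hb => ⟨I.add_mem ha.1 hb.1, ha.2.add hb.2⟩
  zero_mem' := ⟨I.zero_mem, MvPolynomial.isHomogeneous_zero _ _ _⟩
  smul_mem' := fun c p hp =>
    ⟨by simpa [MvPolynomial.smul_eq_C_mul] using I.mul_mem_left (MvPolynomial.C c) hp.1,
     by simpa [MvPolynomial.smul_eq_C_mul] using hp.2.C_mul c⟩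

/-- The Hilbert function `H_I(ℓ) = dim_ℝ I_ℓ`. -/
noncomputable def hilbertI {n : ℕ} (I : Ideal (MvPolynomial (Fin n) ℝ)) (ℓ : ℕ) : ℕ :=
  Module.finrank ℝ (idealDegComp I ℓ)

lemma comp_le_span {n d : ℕ} (hd : 2 ≤ d) (S : Finset (Fin n →₀ ℕ))
    (hS : ∀ a ∈ S, a.degree = d - 1) :
    idealDegComp (Ideal.span ((fun a => (monomial a (1 : ℝ))) '' (S : Set (Fin n →₀ ℕ)))) d ≤
      Submodule.span ℝ ((fun m => (monomial m (1 : ℝ))) '' ((shifts S : Finset (Fin n →₀ ℕ)) : Set (Fin n →₀ ℕ))) := by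
  rintro p ⟨hpI, hph⟩
  rw [← p.support_sum_monomial_coeff]
  apply Submodule.sum_mem
  intro m hm
  have hdm : m.degree = d := by
    by_contra h
    exact (mem_support_iff.mp hm) (hph.coeff_eq_zero h)
  obtain ⟨s, hs, hsm⟩ := mem_ideal_span_monomial_image.mp hpI m hm
  have hmem : m ∈ shifts S := (shifts_degree hd hS hdm).mp ⟨s, hs, hsm⟩
  have : monomial m (coeff m p) = (coeff m p) • monomial m (1:ℝ) := by
    simp [smul_monomial]
  rw [this]
  exact Submodule.smul_mem _ _ (Submodule.subset_span ⟨m, hmem, rfl⟩)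

lemma comp_le_sup {n d : ℕ} (hd : 2 ≤ d) (S T : Finset (Fin n →₀ ℕ))
    (hS : ∀ a ∈ S, a.degree = d - 1) (hT : ∀ a ∈ T, a.degree = d - 1) :
    idealDegComp (Ideal.span ((fun a => (monomial a (1 : ℝ))) '' ((S ∪ T : Finset (Fin n →₀ ℕ)) : Set (Fin n →₀ ℕ)))) d ≤
      idealDegComp (Ideal.span ((fun a => (monomial a (1 : ℝ))) '' (S : Set (Fin n →₀ ℕ)))) d ⊔
        Submodule.span ℝ ((fun m => (monomial m (1 : ℝ))) '' ((shifts T \ shifts S : Finset (Fin n →₀ ℕ)) : Set (Fin n →₀ ℕ))) := by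
  rintro p ⟨hpI, hph⟩
  rw [← p.support_sum_monomial_coeff]
  apply Submodule.sum_mem
  intro m hm
  have hdm : m.degree = d := by
    by_contra h
    exact (mem_support_iff.mp hm) (hph.coeff_eq_zero h)
  obtain ⟨s, hs, hsm⟩ := mem_ideal_span_monomial_image.mp hpI m hm
  by_cases hA : ∃ a ∈ S, a ≤ m
  · apply Submodule.mem_sup_left
    obtain ⟨a, haS, ham⟩ := hA
    refine ⟨?_, isHomogeneous_monomial _ hdm⟩
    have heq : monomial m (coeff m p) = monomial a 1 * monomial (m - a) (coeff m p) := by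
      rw [monomial_mul, one_mul, add_tsub_cancel_of_le ham]
    rw [heq]
    exact Ideal.mul_mem_right _ _ (Ideal.subset_span ⟨a, haS, rfl⟩)
  · apply Submodule.mem_sup_right
    have hsT : s ∈ T := by
      rcases Finset.mem_union.mp (Finset.mem_coe.mp hs) with h | h
      · exact absurd ⟨s, h, hsm⟩ hA
      · exact h
    have hmem : m ∈ shifts T \ shifts S := by
      refine Finset.mem_sdiff.mpr ⟨(shifts_degree hd hT hdm).mp ⟨s, hsT, hsm⟩, ?_⟩
      intro hc
      exact hA ((shifts_degree hd hS hdm).mpr hc)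
    have : monomial m (coeff m p) = (coeff m p) • monomial m (1:ℝ) := by
      simp [smul_monomial]
    rw [this]
    exact Submodule.smul_mem _ _ (Submodule.subset_span ⟨m, hmem, rfl⟩)

lemma hilbert_le {n d : ℕ} (hd : 2 ≤ d) (S T : Finset (Fin n →₀ ℕ))
    (hS : ∀ a ∈ S, a.degree = d - 1) (hT : ∀ a ∈ T, a.degree = d - 1) :
    hilbertI (Ideal.span ((fun a => (monomial a (1 : ℝ))) '' ((S ∪ T : Finset (Fin n →₀ ℕ)) : Set (Fin n →₀ ℕ)))) d ≤
      hilbertI (Ideal.span ((fun a => (monomial a (1 : ℝ))) '' (S : Set (Fin n →₀ ℕ)))) d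
        + (shifts T \ shifts S).card := by
  set X := idealDegComp (Ideal.span ((fun a => (monomial a (1 : ℝ))) '' (S : Set (Fin n →₀ ℕ)))) d with hX
  set Y := Submodule.span ℝ ((fun m => (monomial m (1 : ℝ))) '' ((shifts T \ shifts S : Finset (Fin n →₀ ℕ)) : Set (Fin n →₀ ℕ))) with hY
  have hfinY : FiniteDimensional ℝ Y :=
    FiniteDimensional.span_of_finite ℝ ((shifts T \ shifts S).finite_toSet.image _)
  have hfinSpan : FiniteDimensional ℝ (Submodule.span ℝ
      ((fun m => (monomial m (1 : ℝ))) '' ((shifts S : Finset (Fin n →₀ ℕ)) : Set (Fin n →₀ ℕ)))) :=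
    FiniteDimensional.span_of_finite ℝ ((shifts S).finite_toSet.image _)
  have hfinX : FiniteDimensional ℝ X :=
    Submodule.finiteDimensional_of_le (comp_le_span hd S hS)
  have h1 : hilbertI (Ideal.span ((fun a => (monomial a (1 : ℝ))) '' ((S ∪ T : Finset (Fin n →₀ ℕ)) : Set (Fin n →₀ ℕ)))) d
      ≤ Module.finrank ℝ (X ⊔ Y : Submodule ℝ (MvPolynomial (Fin n) ℝ)) :=
    Submodule.finrank_mono (comp_le_sup hd S T hS hT)
  have h2 : Module.finrank ℝ (X ⊔ Y : Submodule ℝ (MvPolynomial (Fin n) ℝ))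
      ≤ Module.finrank ℝ X + Module.finrank ℝ Y :=
    Submodule.finrank_add_le_finrank_add_finrank X Y
  have h3 : Module.finrank ℝ Y ≤ (shifts T \ shifts S).card := by
    have : ((fun m => (monomial m (1 : ℝ))) '' ((shifts T \ shifts S : Finset (Fin n →₀ ℕ)) : Set (Fin n →₀ ℕ)))
        = (((shifts T \ shifts S).image fun m => (monomial m (1 : ℝ)) : Finset (MvPolynomial (Fin n) ℝ)) : Set (MvPolynomial (Fin n) ℝ)) := by
      simp [Finset.coe_image]
    calc Module.finrank ℝ Y ≤ ((shifts T \ shifts S).image fun m => (monomial m (1 : ℝ))).card := by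
          rw [hY, this]; exact finrank_span_finset_le_card _
      _ ≤ (shifts T \ shifts S).card := Finset.card_image_le
  calc hilbertI _ d ≤ Module.finrank ℝ (X ⊔ Y : Submodule ℝ (MvPolynomial (Fin n) ℝ)) := h1
    _ ≤ Module.finrank ℝ X + Module.finrank ℝ Y := h2
    _ ≤ _ := add_le_add le_rfl h3

lemma coeff_shift_pos {n : ℕ} (A B : Finset (Fin n →₀ ℕ)) (c : (Fin n →₀ ℕ) → ℝ)
    (hcA : ∀ a ∈ A, 0 < c a) (hcB : ∀ b ∈ B, 0 ≤ c b) {m : Fin n →₀ ℕ}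
    (hm : m ∈ shifts A \ shifts B) :
    0 < coeff m ((∑ i, X i) * ((∑ a ∈ A, monomial a (c a)) - ∑ b ∈ B, monomial b (c b))) := by
  have key : ∀ (a : Fin n →₀ ℕ) (r : ℝ), (∑ i : Fin n, X i) * monomial a r
      = ∑ i : Fin n, monomial (a + Finsupp.single i 1) r := by
    intro a r
    rw [Finset.sum_mul]
    refine Finset.sum_congr rfl fun i _ => ?_
    rw [X, monomial_mul, one_mul, add_comm]
  have hexp : (∑ i, X i) * ((∑ a ∈ A, monomial a (c a)) - ∑ b ∈ B, monomial b (c b))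
      = (∑ a ∈ A, ∑ i : Fin n, monomial (a + Finsupp.single i 1) (c a))
        - (∑ b ∈ B, ∑ i : Fin n, monomial (b + Finsupp.single i 1) (c b)) := by
    rw [mul_sub, Finset.mul_sum, Finset.mul_sum]
    congr 1 <;> exact Finset.sum_congr rfl fun x _ => key x _
  obtain ⟨hmA, hmB⟩ := Finset.mem_sdiff.mp hm
  rw [hexp, coeff_sub]
  have hB0 : coeff m (∑ b ∈ B, ∑ i : Fin n, monomial (b + Finsupp.single i 1) (c b)) = 0 := by
    rw [coeff_sum]
    refine Finset.sum_eq_zero fun b hb => ?_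
    rw [coeff_sum]
    refine Finset.sum_eq_zero fun i _ => ?_
    rw [coeff_monomial, if_neg]
    intro h
    exact hmB (mem_shifts.mpr ⟨b, hb, i, h.symm⟩)
  rw [hB0, sub_zero, coeff_sum]
  obtain ⟨a₀, ha₀, i₀, hmi⟩ := mem_shifts.mp hmA
  refine Finset.sum_pos' (fun a ha => ?_) ⟨a₀, ha₀, ?_⟩
  · rw [coeff_sum]
    refine Finset.sum_nonneg fun i _ => ?_
    rw [coeff_monomial]
    split
    · exact (hcA a ha).le
    · exact le_rfl
  · rw [coeff_sum]
    refine Finset.sum_pos' (fun i _ => ?_) ⟨i₀, Finset.mem_univ i₀, ?_⟩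
    · rw [coeff_monomial]
      split
      · exact (hcA a₀ ha₀).le
      · exact le_rfl
    · rw [coeff_monomial, if_pos hmi.symm]
      exact hcA a₀ ha₀

/-- **Proposition 4.6.**  With `q = Σ_{a∈𝒜} c_a x^a − Σ_{b∈ℬ} c_b x^b`
(`𝒜`, `ℬ` disjoint sets of multi-indices of degree `d−1`, all `c_a > 0`) and
monomial ideals `I_f`, `I_g`, `I_{f⊕g}` generated by the monomials with
exponents in `𝒜`, `ℬ`, `𝒜 ∪ ℬ` respectively,
`ρ(s·q) ≥ (H_{I_{f⊕g}}(d) − H_{I_f}(d)) + (H_{I_{f⊕g}}(d) − H_{I_g}(d))`. -/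
theorem rank_lower_bound_via_hilbert
    {n : ℕ} (hn : 1 ≤ n) {d : ℕ} (hd : 2 ≤ d)
    (A B : Finset (Fin n →₀ ℕ)) (hAB : Disjoint A B)
    (hdegA : ∀ a ∈ A, a.degree = d - 1) (hdegB : ∀ b ∈ B, b.degree = d - 1)
    (c : (Fin n →₀ ℕ) → ℝ) (hc : ∀ a ∈ A ∪ B, 0 < c a)
    (q : MvPolynomial (Fin n) ℝ)
    (hq : q = (∑ a ∈ A, monomial a (c a)) - ∑ b ∈ B, monomial b (c b)) :
    (hilbertI (Ideal.span ((fun a => (monomial a (1 : ℝ))) '' ((A ∪ B : Finset (Fin n →₀ ℕ)) : Set (Fin n →₀ ℕ)))) d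
        - hilbertI (Ideal.span ((fun a => (monomial a (1 : ℝ))) '' ((A : Finset (Fin n →₀ ℕ)) : Set (Fin n →₀ ℕ)))) d)
      + (hilbertI (Ideal.span ((fun a => (monomial a (1 : ℝ))) '' ((A ∪ B : Finset (Fin n →₀ ℕ)) : Set (Fin n →₀ ℕ)))) d
        - hilbertI (Ideal.span ((fun a => (monomial a (1 : ℝ))) '' ((B : Finset (Fin n →₀ ℕ)) : Set (Fin n →₀ ℕ)))) d)
      ≤ ((∑ i, X i) * q).support.card := by
  have h1 := hilbert_le hd A B hdegA hdegB
  have h2 := hilbert_le hd B A hdegB hdegA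
  rw [Finset.union_comm B A] at h2
  have hcA : ∀ a ∈ A, 0 < c a := fun a ha => hc a (Finset.mem_union_left _ ha)
  have hcB : ∀ b ∈ B, 0 < c b := fun b hb => hc b (Finset.mem_union_right _ hb)
  have hsub : (shifts A \ shifts B) ∪ (shifts B \ shifts A) ⊆ ((∑ i, X i) * q).support := by
    intro m hm
    rcases Finset.mem_union.mp hm with h | h
    · rw [mem_support_iff, hq]
      exact (coeff_shift_pos A B c hcA (fun b hb => (hcB b hb).le) h).ne'
    · rw [mem_support_iff, hq]
      have hpos := coeff_shift_pos B A c hcB (fun a ha => (hcA a ha).le) h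
      have hneg : (∑ a ∈ A, monomial a (c a)) - ∑ b ∈ B, monomial b (c b)
          = -((∑ b ∈ B, monomial b (c b)) - ∑ a ∈ A, monomial a (c a)) := by ring
      rw [hneg, mul_neg, coeff_neg]
      exact neg_ne_zero.mpr hpos.ne'
  have hcard : (shifts A \ shifts B).card + (shifts B \ shifts A).card
      ≤ ((∑ i, X i) * q).support.card := by
    rw [← Finset.card_union_of_disjoint disjoint_sdiff_sdiff]
    exact Finset.card_le_card hsub
  omega
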